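/- Assume a ≠ 1 and let I₀ be an inverse marginal function. Set Φ₀(y) = I₀(a·c·y) − b·I₀(c·y) and Ψ₀(y) = y^{−L}·I₀(c·y) for y > 0, where L = ln b / ln a. Suppose Φ₀ is strictly decreasing on (0,∞) and that either (a > 1 and lim_{y→0+} Ψ₀(y) = 0) or (a < 1 and lim_{y→∞} Ψ₀(y) = 0). Then for every y > 0 the series I₁(y) = (1+b)·∑_{m=0}^{∞} (−1)^m · b^{m} · I₀(a^{−(m+1)} · c · y) converges, and the resulting function I₁ satisfies the functional equation I₁(a·y) + b·I₁(y) = (1+b)·I₀(c·y) for all y > 0. -/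

import Mathlib

open Set Filter

noncomputable section

/-- A utility function: `C²` on `(0,∞)`, strictly increasing and strictly concave there,
satisfying the Inada conditions. -/
def IsUtility (U : ℝ → ℝ) : Prop :=
  ContDiffOn ℝ 2 U (Set.Ioi 0) ∧
  (∀ x > 0, 0 < deriv U x) ∧
  (∀ x > 0, deriv (deriv U) x < 0) ∧
  Tendsto (deriv U) (nhdsWithin 0 (Set.Ioi 0)) atTop ∧
  Tendsto (deriv U) atTop (nhds 0)

/-- An inverse marginal function: positive, `C¹` on `(0,∞)`, strictly decreasing derivative,
with `I(∞)=0` and `I(0+)=∞`. -/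
def IsInvMarginal (I : ℝ → ℝ) : Prop :=
  (∀ y > 0, 0 < I y) ∧
  ContDiffOn ℝ 1 I (Set.Ioi 0) ∧
  (∀ y > 0, deriv I y < 0) ∧
  Tendsto I atTop (nhds 0) ∧
  Tendsto I (nhdsWithin 0 (Set.Ioi 0)) atTop

/-- `I` is the inverse of the marginal `U'` on the positive reals: `I = (U')⁻¹`. -/
def InvMarginalOf (I U : ℝ → ℝ) : Prop :=
  (∀ x > 0, I (deriv U x) = x) ∧ (∀ y > 0, 0 < I y ∧ deriv U (I y) = y)

/-- `J` is the inverse function of `I` on the positive reals. -/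
def IsInverseOf (J I : ℝ → ℝ) : Prop :=
  (∀ y > 0, J (I y) = y) ∧ (∀ x > 0, 0 < J x ∧ I (J x) = x)

/-- The single-period inverse investment problem:
`U₀(x) = sup {p·U₁(x+π(u−1)) + (1−p)·U₁(x+π(d−1)) : −x/(u−1) ≤ π ≤ x/(1−d)}` for all `x > 0`. -/
def SPIIP (u d p : ℝ) (U₀ U₁ : ℝ → ℝ) : Prop :=
  ∀ x > 0, U₀ x =
    sSup ((fun pi => p * U₁ (x + pi * (u - 1)) + (1 - p) * U₁ (x + pi * (d - 1))) ''
      Set.Icc (-(x / (u - 1))) (x / (1 - d)))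

lemma myrpow_pow (a L : ℝ) (ha0 : 0 < a) (m : ℕ) :
    ((a⁻¹) ^ m : ℝ) ^ (-L) = (a ^ L) ^ m := by
  have h1 : ((a⁻¹ : ℝ) ^ m) = a ^ ((-1 : ℝ) * (m : ℝ)) := by
    rw [← Real.rpow_neg_one a, ← Real.rpow_natCast (a ^ (-1:ℝ)) m, ← Real.rpow_mul ha0.le]
  rw [h1, ← Real.rpow_mul ha0.le, ← Real.rpow_natCast (a ^ L) m, ← Real.rpow_mul ha0.le]
  ring_nf

lemma aux_main (a b c L : ℝ) (ha0 : 0 < a) (hb0 : 0 < b) (hc0 : 0 < c)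
    (hab : a ^ L = b)
    (I₀ : ℝ → ℝ) (hIpos : ∀ y > 0, 0 < I₀ y)
    (hΦ : StrictAntiOn (fun y => I₀ (a * c * y) - b * I₀ (c * y)) (Set.Ioi 0))
    (hΨ : (1 < a ∧ Tendsto (fun y => y ^ (-L) * I₀ (c * y)) (nhdsWithin 0 (Set.Ioi 0)) (nhds 0)) ∨
          (a < 1 ∧ Tendsto (fun y => y ^ (-L) * I₀ (c * y)) atTop (nhds 0))) :
    ∃ I₁ : ℝ → ℝ,
      (∀ y > 0, Tendsto
        (fun N => ∑ m ∈ Finset.range N,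
          (1 + b) * ((-1 : ℝ) ^ m * b ^ m * I₀ (a ^ (-((m : ℤ) + 1)) * c * y)))
        atTop (nhds (I₁ y))) ∧
      (∀ y > 0, I₁ (a * y) + b * I₁ y = (1 + b) * I₀ (c * y)) := by
  have hane : a ≠ 0 := ha0.ne'
  set g : ℝ → ℝ := fun z => z ^ (-L) * I₀ (c * z) with hgdef
  set Φ : ℝ → ℝ := fun z => I₀ (a * c * z) - b * I₀ (c * z) with hΦdef
  -- zpow to inv-pow
  have hzp : ∀ m : ℕ, a ^ (-((m : ℤ) + 1)) = (a⁻¹) ^ (m + 1) := by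
    intro m
    rw [show -((m : ℤ) + 1) = -(((m + 1 : ℕ) : ℤ)) by push_cast; ring, zpow_neg,
      zpow_natCast, inv_pow]
  have hinvpos : (0 : ℝ) < a⁻¹ := inv_pos.mpr ha0
  have hppos : ∀ m : ℕ, (0 : ℝ) < (a⁻¹) ^ m := fun m => pow_pos hinvpos m
  -- the term computation
  have hterm : ∀ y : ℝ, 0 < y → ∀ m : ℕ,
      b ^ m * I₀ (a ^ (-((m : ℤ) + 1)) * c * y) = y ^ L / b * g ((a⁻¹) ^ (m + 1) * y) := by
    intro y hy m
    have hsy : (0 : ℝ) < (a⁻¹) ^ (m + 1) * y := mul_pos (hppos _) hy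
    have hkey : y ^ L / b * (((a⁻¹) ^ (m + 1) * y) ^ (-L)) = b ^ m := by
      rw [Real.mul_rpow (hppos _).le hy.le, myrpow_pow a L ha0 (m + 1), hab]
      have h1 : y ^ L * y ^ (-L) = 1 := by
        rw [← Real.rpow_add hy, add_neg_cancel, Real.rpow_zero]
      field_simp
      linear_combination b ^ (m + 1) * h1
    simp only [hgdef]
    rw [hzp m, show (a⁻¹) ^ (m + 1) * c * y = c * ((a⁻¹) ^ (m + 1) * y) by ring, ← hkey]
    ring
  have hgpos : ∀ z : ℝ, 0 < z → 0 < g z := fun z hz =>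
    mul_pos (Real.rpow_pos_of_pos hz _) (hIpos _ (mul_pos hc0 hz))
  -- Φ in terms of g
  have hphi_eq : ∀ z : ℝ, 0 < z → Φ z = b * z ^ L * (g (a * z) - g z) := by
    intro z hz
    have h1 : z ^ L * z ^ (-L) = 1 := by
      rw [← Real.rpow_add hz, add_neg_cancel, Real.rpow_zero]
    have h2 : ((a * z) : ℝ) ^ (-L) = b⁻¹ * z ^ (-L) := by
      rw [Real.mul_rpow ha0.le hz.le, Real.rpow_neg ha0.le, hab]
    have hbb : b * b⁻¹ = 1 := mul_inv_cancel₀ hb0.ne'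
    show I₀ (a * c * z) - b * I₀ (c * z) =
      b * z ^ L * ((a * z) ^ (-L) * I₀ (c * (a * z)) - z ^ (-L) * I₀ (c * z))
    rw [h2, show c * (a * z) = a * c * z by ring]
    have : b * z ^ L * (b⁻¹ * z ^ (-L) * I₀ (a * c * z) - z ^ (-L) * I₀ (c * z)) =
        (b * b⁻¹) * ((z ^ L * z ^ (-L)) * I₀ (a * c * z)) -
          b * ((z ^ L * z ^ (-L)) * I₀ (c * z)) := by ring
    rw [this, hbb, h1]; ring
  -- sign transfers
  have hphi_nonneg : ∀ z : ℝ, 0 < z → 0 ≤ Φ z → g z ≤ g (a * z) := by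
    intro z hz h
    rw [hphi_eq z hz] at h
    have hf : 0 < b * z ^ L := mul_pos hb0 (Real.rpow_pos_of_pos hz _)
    nlinarith [hf]
  have hphi_neg : ∀ z : ℝ, 0 < z → Φ z < 0 → g (a * z) < g z := by
    intro z hz h
    rw [hphi_eq z hz] at h
    have hf : 0 < b * z ^ L := mul_pos hb0 (Real.rpow_pos_of_pos hz _)
    nlinarith [hf]
  -- limit of g along the geometric sequence
  have hA : ∀ y : ℝ, 0 < y → Tendsto (fun m : ℕ => g ((a⁻¹) ^ (m + 1) * y)) atTop (nhds 0) := by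
    intro y hy
    rcases hΨ with ⟨ha1, hΨ⟩ | ⟨ha1, hΨ⟩
    · have hlt : a⁻¹ < 1 := inv_lt_one_of_one_lt₀ ha1
      have h2 : Tendsto (fun m : ℕ => (a⁻¹) ^ (m + 1)) atTop (nhds 0) := by
        exact (tendsto_pow_atTop_nhds_zero_of_lt_one hinvpos.le hlt).comp
          (tendsto_add_atTop_nat 1)
      have h0 : Tendsto (fun m : ℕ => (a⁻¹) ^ (m + 1) * y) atTop (nhds 0) := by
        simpa using h2.mul_const y
      exact hΨ.comp (tendsto_nhdsWithin_of_tendsto_nhds_of_eventually_within _ h0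
        (Eventually.of_forall fun m => mul_pos (hppos _) hy))
    · have hlt : 1 < a⁻¹ := (one_lt_inv₀ ha0).mpr ha1
      have h0 : Tendsto (fun m : ℕ => (a⁻¹) ^ (m + 1) * y) atTop atTop :=
        (((tendsto_pow_atTop_atTop_of_one_lt hlt).comp
          (tendsto_add_atTop_nat 1))).atTop_mul_const hy
      exact hΨ.comp h0
  -- goodness: all tail points have nonnegative Φ
  have hB : ∀ y : ℝ, 0 < y → ∃ M : ℕ, ∀ m : ℕ,
      0 ≤ Φ ((a⁻¹) ^ (m + 2) * ((a⁻¹) ^ M * y)) := by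
    rcases hΨ with ⟨ha1, hΨ⟩ | ⟨ha1, hΨ⟩
    · have hlt : a⁻¹ < 1 := inv_lt_one_of_one_lt₀ ha1
      have hk : ∃ k : ℕ, 0 ≤ Φ ((a⁻¹) ^ k) := by
        by_contra h
        push_neg at h
        have hchain : ∀ k : ℕ, g 1 ≤ g ((a⁻¹) ^ k) := by
          intro k
          induction k with
          | zero => simp
          | succ k ih =>
            refine ih.trans (le_of_lt ?_)
            have h2 := hphi_neg ((a⁻¹) ^ (k + 1)) (hppos _) (h (k + 1))
            rwa [show a * (a⁻¹) ^ (k + 1) = (a⁻¹) ^ k by rw [pow_succ]; field_simp] at h2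
        have hto : Tendsto (fun k : ℕ => g ((a⁻¹) ^ k)) atTop (nhds 0) := by
          have h0 : Tendsto (fun k : ℕ => (a⁻¹) ^ k) atTop (nhds 0) :=
            tendsto_pow_atTop_nhds_zero_of_lt_one hinvpos.le hlt
          exact hΨ.comp (tendsto_nhdsWithin_of_tendsto_nhds_of_eventually_within _ h0
            (Eventually.of_forall fun k => hppos k))
        exact absurd (ge_of_tendsto' hto hchain) (not_le.mpr (hgpos 1 one_pos))
      obtain ⟨k, hk⟩ := hk
      intro y hy
      have h0 : Tendsto (fun M : ℕ => (a⁻¹) ^ M * y) atTop (nhds 0) := by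
        simpa using (tendsto_pow_atTop_nhds_zero_of_lt_one hinvpos.le hlt).mul_const y
      obtain ⟨M, hM⟩ := (h0.eventually_lt_const (hppos k)).exists
      refine ⟨M, fun m => ?_⟩
      have hz : (0 : ℝ) < (a⁻¹) ^ (m + 2) * ((a⁻¹) ^ M * y) :=
        mul_pos (hppos _) (mul_pos (hppos _) hy)
      have hle : (a⁻¹) ^ (m + 2) * ((a⁻¹) ^ M * y) < (a⁻¹) ^ k := by
        have h1 : (a⁻¹) ^ (m + 2) ≤ 1 := pow_le_one₀ hinvpos.le hlt.le
        nlinarith [mul_pos (hppos M) hy]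
      exact (hk.trans_lt (hΦ hz (hppos k) hle)).le
    · have hlt : 1 < a⁻¹ := (one_lt_inv₀ ha0).mpr ha1
      have hΦpos : ∀ z : ℝ, 0 < z → 0 ≤ Φ z := by
        intro z hz
        by_contra h
        push_neg at h
        have hchain : ∀ k : ℕ, g z ≤ g ((a⁻¹) ^ k * z) := by
          intro k
          induction k with
          | zero => simp
          | succ k ih =>
            refine ih.trans (le_of_lt ?_)
            have hzk : (0 : ℝ) < (a⁻¹) ^ (k + 1) * z := mul_pos (hppos _) hz
            have hone : (1 : ℝ) < (a⁻¹) ^ (k + 1) := one_lt_pow₀ hlt (Nat.succ_ne_zero k)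
            have hgt : z < (a⁻¹) ^ (k + 1) * z := by nlinarith
            have hneg : Φ ((a⁻¹) ^ (k + 1) * z) < 0 := (hΦ hz hzk hgt).trans h
            have h2 := hphi_neg _ hzk hneg
            rwa [show a * ((a⁻¹) ^ (k + 1) * z) = (a⁻¹) ^ k * z by
              rw [pow_succ]; field_simp] at h2
        have hto : Tendsto (fun k : ℕ => g ((a⁻¹) ^ k * z)) atTop (nhds 0) :=
          hΨ.comp ((tendsto_pow_atTop_atTop_of_one_lt hlt).atTop_mul_const hz)
        exact absurd (ge_of_tendsto' hto hchain) (not_le.mpr (hgpos z hz))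
      intro y hy
      exact ⟨0, fun m => hΦpos _ (mul_pos (hppos _) (mul_pos (hppos _) hy))⟩
  -- terms tend to zero
  have ht0 : ∀ y : ℝ, 0 < y →
      Tendsto (fun m : ℕ => b ^ m * I₀ (a ^ (-((m : ℤ) + 1)) * c * y)) atTop (nhds 0) := by
    intro y hy
    have hfe : (fun m : ℕ => b ^ m * I₀ (a ^ (-((m : ℤ) + 1)) * c * y)) =
        fun m : ℕ => y ^ L / b * g ((a⁻¹) ^ (m + 1) * y) := funext fun m => hterm y hy m
    rw [hfe]
    simpa using (hA y hy).const_mul (y ^ L / b)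
  -- convergence at "good" points
  have hgood : ∀ y : ℝ, 0 < y → (∀ m : ℕ, 0 ≤ Φ ((a⁻¹) ^ (m + 2) * y)) →
      ∃ l, Tendsto (fun N => ∑ m ∈ Finset.range N,
        (-1 : ℝ) ^ m * (b ^ m * I₀ (a ^ (-((m : ℤ) + 1)) * c * y))) atTop (nhds l) := by
    intro y hy hgd
    have hanti : Antitone (fun m : ℕ => b ^ m * I₀ (a ^ (-((m : ℤ) + 1)) * c * y)) := by
      apply antitone_nat_of_succ_le
      intro m
      rw [hterm y hy m, hterm y hy (m + 1)]
      have hfac : 0 ≤ y ^ L / b := le_of_lt (div_pos (Real.rpow_pos_of_pos hy _) hb0)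
      apply mul_le_mul_of_nonneg_left _ hfac
      have h1 := hphi_nonneg _ (mul_pos (hppos (m + 2)) hy) (hgd m)
      rw [show a * ((a⁻¹) ^ (m + 2) * y) = (a⁻¹) ^ (m + 1) * y by
        rw [pow_succ]; field_simp] at h1
      exact h1
    exact hanti.tendsto_alternating_series_of_tendsto_zero (ht0 y hy)
  set S : ℝ → ℕ → ℝ := fun y N => ∑ m ∈ Finset.range N,
    (-1 : ℝ) ^ m * b ^ m * I₀ (a ^ (-((m : ℤ) + 1)) * c * y) with hSdef
  -- convergence everywhere
  have hconv : ∀ y : ℝ, 0 < y → ∃ l, Tendsto (S y) atTop (nhds l) := by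
    intro y hy
    obtain ⟨M, hM⟩ := hB y hy
    have hy' : 0 < (a⁻¹) ^ M * y := mul_pos (hppos _) hy
    obtain ⟨l, hl⟩ := hgood ((a⁻¹) ^ M * y) hy' hM
    have hshift : ∀ N : ℕ, S y (M + N) = S y M
        + (-1 : ℝ) ^ M * b ^ M * ∑ m ∈ Finset.range N,
            (-1 : ℝ) ^ m * (b ^ m * I₀ (a ^ (-((m : ℤ) + 1)) * c * ((a⁻¹) ^ M * y))) := by
      intro N
      rw [hSdef]
      simp only []
      rw [Finset.sum_range_add, Finset.mul_sum]
      congr 1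
      apply Finset.sum_congr rfl
      intro m _
      rw [hzp, hzp]
      rw [show (a⁻¹) ^ (m + 1) * c * ((a⁻¹) ^ M * y) = (a⁻¹) ^ (M + m + 1) * c * y by ring]
      rw [pow_add (-1 : ℝ), pow_add b]
      ring
    have hT : Tendsto (fun N => S y (M + N)) atTop
        (nhds (S y M + (-1 : ℝ) ^ M * b ^ M * l)) := by
      simp only [hshift]
      exact tendsto_const_nhds.add (hl.const_mul _)
    refine ⟨S y M + (-1 : ℝ) ^ M * b ^ M * l, (tendsto_add_atTop_iff_nat M).mp ?_⟩
    have hfe : (fun N => S y (N + M)) = fun N => S y (M + N) :=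
      funext fun N => by rw [Nat.add_comm]
    rw [hfe]
    exact hT
  have hSlim : ∀ y : ℝ, 0 < y → Tendsto (S y) atTop (nhds (limUnder atTop (S y))) := by
    intro y hy
    obtain ⟨l, hl⟩ := hconv y hy
    rwa [hl.limUnder_eq]
  refine ⟨fun y => (1 + b) * limUnder atTop (S y), fun y hy => ?_, fun y hy => ?_⟩
  · have h1 : (fun N => ∑ m ∈ Finset.range N,
        (1 + b) * ((-1 : ℝ) ^ m * b ^ m * I₀ (a ^ (-((m : ℤ) + 1)) * c * y)))
        = fun N => (1 + b) * S y N := by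
      funext N
      rw [hSdef]
      exact (Finset.mul_sum _ _ _).symm
    rw [h1]
    exact (hSlim y hy).const_mul _
  · have hay : 0 < a * y := mul_pos ha0 hy
    set v : ℕ → ℝ := fun k => (-1 : ℝ) ^ k * b ^ k * I₀ ((a⁻¹) ^ k * c * y) with hvdef
    have hid : ∀ N, S (a * y) N + b * S y N = v 0 - v N := by
      intro N
      have hterm2 : ∀ m : ℕ, ((-1 : ℝ) ^ m * b ^ m * I₀ (a ^ (-((m : ℤ) + 1)) * c * (a * y)))
          + b * ((-1 : ℝ) ^ m * b ^ m * I₀ (a ^ (-((m : ℤ) + 1)) * c * y)) = v m - v (m + 1) := by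
        intro m
        rw [hzp]
        rw [show (a⁻¹) ^ (m + 1) * c * (a * y) = (a⁻¹) ^ m * c * y by
          rw [pow_succ]; field_simp]
        rw [hvdef]
        simp only []
        ring
      calc S (a * y) N + b * S y N
          = ∑ m ∈ Finset.range N, (v m - v (m + 1)) := by
            rw [hSdef]
            simp only []
            rw [Finset.mul_sum, ← Finset.sum_add_distrib]
            exact Finset.sum_congr rfl fun m _ => hterm2 m
        _ = v 0 - v N := Finset.sum_range_sub' v N
    have hw : Tendsto (fun k : ℕ => b ^ k * I₀ ((a⁻¹) ^ k * c * y)) atTop (nhds 0) := by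
      rw [← tendsto_add_atTop_iff_nat 1]
      have heq : (fun k : ℕ => b ^ (k + 1) * I₀ ((a⁻¹) ^ (k + 1) * c * y))
          = fun k : ℕ => b * (b ^ k * I₀ (a ^ (-((k : ℤ) + 1)) * c * y)) := by
        funext k
        rw [hzp]
        ring
      rw [heq]
      simpa using (ht0 y hy).const_mul b
    have hv0 : Tendsto v atTop (nhds 0) := by
      apply squeeze_zero_norm _ hw
      intro k
      have hX : 0 < I₀ ((a⁻¹) ^ k * c * y) :=
        hIpos _ (mul_pos (mul_pos (hppos k) hc0) hy)
      rw [hvdef]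
      simp only []
      rw [Real.norm_eq_abs, abs_mul, abs_mul, abs_pow, abs_pow, abs_neg, abs_one, one_pow,
        one_mul, abs_of_pos hb0, abs_of_pos hX]
    have h1 : Tendsto (fun N => S (a * y) N + b * S y N) atTop
        (nhds (limUnder atTop (S (a * y)) + b * limUnder atTop (S y))) :=
      (hSlim _ hay).add ((hSlim y hy).const_mul b)
    have h2 : Tendsto (fun N => S (a * y) N + b * S y N) atTop (nhds (v 0 - 0)) := by
      simp only [hid]
      exact tendsto_const_nhds.sub hv0
    have h3 := tendsto_nhds_unique h1 h2
    have hv00 : v 0 = I₀ (c * y) := by rw [hvdef]; simp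
    rw [hv00, sub_zero] at h3
    show (1 + b) * limUnder atTop (S (a * y)) + b * ((1 + b) * limUnder atTop (S y))
        = (1 + b) * I₀ (c * y)
    linear_combination (1 + b) * h3

/-- Under the decreasing-`Φ₀` conditions, the alternating series
`I₁(y) = (1+b)·∑ (−1)^m b^m I₀(a^{−(m+1)} c y)` converges for every `y > 0`, and the resulting
function solves the functional equation. -/
theorem stmt12
    (u d p q a b c L : ℝ)
    (hu : 1 < u) (hd0 : 0 < d) (hd1 : d < 1) (hp0 : 0 < p) (hp1 : p < 1)
    (hq : q = (1 - d) / (u - d)) (ha : a = ((1 - p) * q) / (p * (1 - q)))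
    (hb : b = (1 - q) / q) (hc : c = (1 - p) / (1 - q))
    (ha1 : a ≠ 1)
    (hL : L = Real.log b / Real.log a)
    (I₀ : ℝ → ℝ) (hI₀ : IsInvMarginal I₀)
    (hΦ : StrictAntiOn (fun y => I₀ (a * c * y) - b * I₀ (c * y)) (Set.Ioi 0))
    (hΨ : (1 < a ∧ Tendsto (fun y => y ^ (-L) * I₀ (c * y)) (nhdsWithin 0 (Set.Ioi 0)) (nhds 0)) ∨
          (a < 1 ∧ Tendsto (fun y => y ^ (-L) * I₀ (c * y)) atTop (nhds 0))) :
    ∃ I₁ : ℝ → ℝ,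
      (∀ y > 0, Tendsto
        (fun N => ∑ m ∈ Finset.range N,
          (1 + b) * ((-1 : ℝ) ^ m * b ^ m * I₀ (a ^ (-((m : ℤ) + 1)) * c * y)))
        atTop (nhds (I₁ y))) ∧
      (∀ y > 0, I₁ (a * y) + b * I₁ y = (1 + b) * I₀ (c * y)) := by
  have hud : (0 : ℝ) < u - d := by linarith
  have hq0 : 0 < q := by rw [hq]; exact div_pos (by linarith) hud
  have hq1 : q < 1 := by rw [hq, div_lt_one hud]; linarith
  have h1q : (0 : ℝ) < 1 - q := by linarith
  have ha0 : 0 < a := by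
    rw [ha]; exact div_pos (mul_pos (by linarith) hq0) (mul_pos hp0 h1q)
  have hb0 : 0 < b := by rw [hb]; exact div_pos h1q hq0
  have hc0 : 0 < c := by rw [hc]; exact div_pos (by linarith) h1q
  have hlog : Real.log a ≠ 0 := by
    intro h
    rcases Real.log_eq_zero.mp h with h' | h' | h'
    · exact absurd h' ha0.ne'
    · exact ha1 h'
    · linarith
  have hab : a ^ L = b := by
    rw [hL, Real.rpow_def_of_pos ha0, mul_comm, div_mul_cancel₀ _ hlog, Real.exp_log hb0]
  exact aux_main a b c L ha0 hb0 hc0 hab I₀ hI₀.1 hΦ hΨ
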